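/- Let X be a random variable with values in [a,b], with absolutely continuous density f : [a,b] → [0,1] whose derivative is essentially bounded, and CDF F(x) = ∫_a^x f(t) dt. Then |(1/2)[(F((3a+b)/4)+F((a+3b)/4))/2 + 1/2] + ((b-a)/8)·(f((3a+b)/4) - f((a+3b)/4))/2 - (b - E(X))/(b-a)| ≤ (1/64)(b-a)²·‖f'‖_∞. -/

import Mathlib

open MeasureTheory Set

lemma piece_bound (u v : ℝ) (P g f' : ℝ → ℝ) (M C : ℝ) (hM0 : 0 ≤ M) (hC0 : 0 ≤ C)
    (hPg : ∀ t ∈ Set.uIoc u v, |P t| ≤ g t)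
    (hgi : IntervalIntegrable g MeasureTheory.volume u v)
    (hgval : (∫ t in u..v, g t) = C)
    (hf'M : ∀ᵐ t ∂(MeasureTheory.volume.restrict (Set.uIoc u v)), |f' t| ≤ M) :
    |∫ t in u..v, P t * f' t| ≤ M * C := by
  have h := intervalIntegral.norm_integral_le_abs_of_norm_le (μ := volume)
    (f := fun t => P t * f' t) (g := fun t => M * g t) ?_ (hgi.const_mul M)
  · rwa [intervalIntegral.integral_const_mul, hgval, Real.norm_eq_abs,
      abs_of_nonneg (mul_nonneg hM0 hC0)] at h
  · filter_upwards [hf'M, ae_restrict_mem measurableSet_uIoc] with t h1 h2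
    have h3 := hPg t h2
    have he : ‖P t * f' t‖ = |P t| * |f' t| := by rw [Real.norm_eq_abs, abs_mul]
    rw [he]
    calc |P t| * |f' t| ≤ g t * M :=
          mul_le_mul h3 h1 (abs_nonneg _) ((abs_nonneg (P t)).trans h3)
      _ = M * g t := mul_comm _ _

lemma sign1 (a b t : ℝ) (h1 : a ≤ t) (h2 : t ≤ a + (b-a)/4) :
    (t-a)^2/2 - (b-a)*(t-a)/4 ≤ 0 := by nlinarith

lemma sign3 (a b t : ℝ) (h1 : a + 3*(b-a)/4 ≤ t) (h2 : t ≤ b) :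
    (t-b)*(t-(a+b)/2)/2 ≤ 0 := by nlinarith

set_option maxHeartbeats 1000000 in
theorem pdf_best_estimator
    (a b : ℝ) (hab : a < b) (f f' : ℝ → ℝ) (M : ℝ)
    (hrange : ∀ t ∈ Icc a b, f t ∈ Icc (0:ℝ) 1)
    (hf' : ∀ t ∈ Icc a b, HasDerivAt f (f' t) t)
    (hint : IntervalIntegrable f' volume a b)
    (hM : ∀ᵐ t ∂volume, t ∈ Icc a b → |f' t| ≤ M)
    (hdens : (∫ t in a..b, f t) = 1)
    (F : ℝ → ℝ) (hF : ∀ y, F y = ∫ t in a..y, f t)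
    (E : ℝ) (hE : E = ∫ t in a..b, t * f t) :
    |(1/2) * ((F ((3*a + b)/4) + F ((a + 3*b)/4)) / 2 + 1/2)
      + ((b - a)/8) * ((f ((3*a + b)/4) - f ((a + 3*b)/4)) / 2)
      - (b - E) / (b - a)|
    ≤ (1/64) * (b - a)^2 * M := by
  have hL : (0:ℝ) < b - a := sub_pos.mpr hab
  have hLne : (b - a) ≠ 0 := ne_of_gt hL
  set c1 : ℝ := (3*a + b)/4 with hc1def
  set c2 : ℝ := (a + 3*b)/4 with hc2def
  clear_value c1 c2
  have hac1 : a ≤ c1 := by rw [hc1def]; linarith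
  have hc1c2 : c1 ≤ c2 := by rw [hc1def, hc2def]; linarith
  have hc2b : c2 ≤ b := by rw [hc2def]; linarith
  have hc1b : c1 ≤ b := le_trans hc1c2 hc2b
  have hac2 : a ≤ c2 := le_trans hac1 hc1c2
  -- continuity / integrability
  have hfc : ContinuousOn f (Icc a b) := fun x hx =>
    (hf' x hx).continuousAt.continuousWithinAt
  have hmono : ∀ u v : ℝ, a ≤ u → u ≤ v → v ≤ b → uIcc u v ⊆ Icc a b := by
    intro u v h1 h2 h3
    rw [uIcc_of_le h2]
    exact Icc_subset_Icc h1 h3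
  have hfi : ∀ u v : ℝ, a ≤ u → u ≤ v → v ≤ b → IntervalIntegrable f volume u v := by
    intro u v h1 h2 h3
    exact (hfc.mono (hmono u v h1 h2 h3)).intervalIntegrable
  have hgi : ∀ u v : ℝ, a ≤ u → u ≤ v → v ≤ b →
      IntervalIntegrable (fun t => t * f t) volume u v := by
    intro u v h1 h2 h3
    exact ((continuousOn_id.mul hfc).mono (hmono u v h1 h2 h3)).intervalIntegrable
  have hf'i : ∀ u v : ℝ, a ≤ u → u ≤ v → v ≤ b → IntervalIntegrable f' volume u v := by
    intro u v h1 h2 h3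
    refine hint.mono_set ?_
    rw [uIcc_of_le h2, uIcc_of_le (le_of_lt hab)]
    exact Icc_subset_Icc h1 h3
  have hfd : ∀ u v : ℝ, a ≤ u → u ≤ v → v ≤ b →
      ∀ x ∈ uIcc u v, HasDerivAt f (f' x) x := by
    intro u v h1 h2 h3 x hx
    exact hf' x (hmono u v h1 h2 h3 hx)
  -- ae bound on pieces
  have haeM : ∀ u v : ℝ, a ≤ u → u ≤ v → v ≤ b →
      ∀ᵐ t ∂(volume.restrict (Set.uIoc u v)), |f' t| ≤ M := by
    intro u v h1 h2 h3
    filter_upwards [ae_restrict_of_ae hM, ae_restrict_mem measurableSet_uIoc] with t ht1 ht2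
    exact ht1 (hmono u v h1 h2 h3 (uIoc_subset_uIcc ht2))
  -- M ≥ 0
  have hM0 : 0 ≤ M := by
    have h1 : ∀ᵐ t ∂(volume.restrict (Icc a b)), t ∈ Icc a b → |f' t| ≤ M :=
      ae_restrict_of_ae hM
    have h2 : ∀ᵐ t ∂(volume.restrict (Icc a b)), t ∈ Icc a b :=
      ae_restrict_mem measurableSet_Icc
    have hne : volume.restrict (Icc a b) ≠ 0 := by
      rw [Ne, Measure.restrict_eq_zero]
      simp only [Real.volume_Icc, ENNReal.ofReal_eq_zero, not_le]
      linarith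
    haveI : (ae (volume.restrict (Icc a b))).NeBot := ae_neBot.mpr hne
    obtain ⟨t, ht1, ht2⟩ := (h1.and h2).exists
    exact le_trans (abs_nonneg _) (ht1 ht2)
  -- splitting the integrals
  have ef1 := intervalIntegral.integral_add_adjacent_intervals
    (hfi a c1 le_rfl hac1 hc1b) (hfi c1 c2 hac1 hc1c2 hc2b)
  have ef2 := intervalIntegral.integral_add_adjacent_intervals
    (hfi a c2 le_rfl hac2 hc2b) (hfi c2 b hac2 hc2b le_rfl)
  have eg1 := intervalIntegral.integral_add_adjacent_intervals
    (hgi a c1 le_rfl hac1 hc1b) (hgi c1 c2 hac1 hc1c2 hc2b)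
  have eg2 := intervalIntegral.integral_add_adjacent_intervals
    (hgi a c2 le_rfl hac2 hc2b) (hgi c2 b hac2 hc2b le_rfl)
  have hsplitf : (∫ t in a..c1, f t) + (∫ t in c1..c2, f t) + (∫ t in c2..b, f t) = 1 := by
    rw [ef1, ef2, hdens]
  have hEsplit : E = (∫ t in a..c1, t * f t) + (∫ t in c1..c2, t * f t)
      + (∫ t in c2..b, t * f t) := by
    rw [hE, ← eg2, ← eg1]
  have hFc1 : F c1 = ∫ t in a..c1, f t := hF c1
  have hFc2 : F c2 = (∫ t in a..c1, f t) + (∫ t in c1..c2, f t) := by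
    rw [hF c2, ← ef1]
  -- Integration by parts on each piece (kernels scaled by (b-a))
  have hibp1 : (∫ t in a..c1, ((t-a)^2/2 - (b-a)*(t-a)/4) * f' t)
      = ((c1-a)^2/2 - (b-a)*(c1-a)/4) * f c1 - ((a-a)^2/2 - (b-a)*(a-a)/4) * f a
        - ∫ t in a..c1, ((t-a) - (b-a)/4) * f t := by
    refine intervalIntegral.integral_mul_deriv_eq_deriv_mul ?_ (hfd a c1 le_rfl hac1 hc1b) ?_
      (hf'i a c1 le_rfl hac1 hc1b)
    · intro x _
      have h := ((((hasDerivAt_id x).sub_const a).pow 2).div_const 2).sub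
        ((((hasDerivAt_id x).sub_const a).const_mul (b-a)).div_const 4)
      simp only [id_eq] at h
      refine h.congr_deriv ?_
      push_cast
      ring
    · exact (by fun_prop : Continuous fun t : ℝ => (t-a) - (b-a)/4).intervalIntegrable _ _
  have hibp2 : (∫ t in c1..c2, ((t-(a+b)/2)^2/2) * f' t)
      = ((c2-(a+b)/2)^2/2) * f c2 - ((c1-(a+b)/2)^2/2) * f c1
        - ∫ t in c1..c2, (t-(a+b)/2) * f t := by
    refine intervalIntegral.integral_mul_deriv_eq_deriv_mul ?_ (hfd c1 c2 hac1 hc1c2 hc2b) ?_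
      (hf'i c1 c2 hac1 hc1c2 hc2b)
    · intro x _
      have h := (((hasDerivAt_id x).sub_const ((a+b)/2)).pow 2).div_const 2
      simp only [id_eq] at h
      refine h.congr_deriv ?_
      push_cast
      ring
    · exact (by fun_prop : Continuous fun t : ℝ => t-(a+b)/2).intervalIntegrable _ _
  have hibp3 : (∫ t in c2..b, ((t-b)*(t-(a+b)/2)/2) * f' t)
      = ((b-b)*(b-(a+b)/2)/2) * f b - ((c2-b)*(c2-(a+b)/2)/2) * f c2
        - ∫ t in c2..b, ((2*t - b - (a+b)/2)/2) * f t := by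
    refine intervalIntegral.integral_mul_deriv_eq_deriv_mul ?_ (hfd c2 b hac2 hc2b le_rfl) ?_
      (hf'i c2 b hac2 hc2b le_rfl)
    · intro x _
      have h := (((hasDerivAt_id x).sub_const b).mul
        ((hasDerivAt_id x).sub_const ((a+b)/2))).div_const 2
      simp only [id_eq] at h
      refine h.congr_deriv ?_
      push_cast
      ring
    · exact (by fun_prop :
        Continuous fun t : ℝ => (2*t - b - (a+b)/2)/2).intervalIntegrable _ _
  -- linearize the integrals of P' * f
  have hI1 : (∫ t in a..c1, ((t-a) - (b-a)/4) * f t)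
      = (∫ t in a..c1, t * f t) + (-(a) - (b-a)/4) * (∫ t in a..c1, f t) := by
    rw [← intervalIntegral.integral_const_mul,
      ← intervalIntegral.integral_add (hgi a c1 le_rfl hac1 hc1b)
        ((hfi a c1 le_rfl hac1 hc1b).const_mul _)]
    refine intervalIntegral.integral_congr fun t _ => ?_
    ring
  have hI2 : (∫ t in c1..c2, (t-(a+b)/2) * f t)
      = (∫ t in c1..c2, t * f t) + (-((a+b)/2)) * (∫ t in c1..c2, f t) := by
    rw [← intervalIntegral.integral_const_mul,
      ← intervalIntegral.integral_add (hgi c1 c2 hac1 hc1c2 hc2b)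
        ((hfi c1 c2 hac1 hc1c2 hc2b).const_mul _)]
    refine intervalIntegral.integral_congr fun t _ => ?_
    ring
  have hI3 : (∫ t in c2..b, ((2*t - b - (a+b)/2)/2) * f t)
      = (∫ t in c2..b, t * f t) + (-((b + (a+b)/2)/2)) * (∫ t in c2..b, f t) := by
    rw [← intervalIntegral.integral_const_mul,
      ← intervalIntegral.integral_add (hgi c2 b hac2 hc2b le_rfl)
        ((hfi c2 b hac2 hc2b le_rfl).const_mul _)]
    refine intervalIntegral.integral_congr fun t _ => ?_
    ring
  -- key identity, multiplied through by (b - a)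
  have key2 : ((1/2) * ((F c1 + F c2) / 2 + 1/2)
        + ((b - a)/8) * ((f c1 - f c2) / 2)) * (b - a) - (b - E)
      = -((∫ t in a..c1, ((t-a)^2/2 - (b-a)*(t-a)/4) * f' t)
        + (∫ t in c1..c2, ((t-(a+b)/2)^2/2) * f' t)
        + (∫ t in c2..b, ((t-b)*(t-(a+b)/2)/2) * f' t)) := by
    have hsplitf' := hsplitf
    rw [hc1def, hc2def] at hsplitf'
    rw [hibp1, hibp2, hibp3, hI1, hI2, hI3, hFc1, hFc2, hEsplit, hc1def, hc2def]
    linear_combination ((3*b + a)/4) * hsplitf'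
  have key : (1/2) * ((F c1 + F c2) / 2 + 1/2)
        + ((b - a)/8) * ((f c1 - f c2) / 2) - (b - E) / (b - a)
      = -((∫ t in a..c1, ((t-a)^2/2 - (b-a)*(t-a)/4) * f' t)
        + (∫ t in c1..c2, ((t-(a+b)/2)^2/2) * f' t)
        + (∫ t in c2..b, ((t-b)*(t-(a+b)/2)/2) * f' t)) / (b - a) := by
    rw [← key2]
    field_simp
  -- bounds on the three pieces
  have hb1 : |∫ t in a..c1, ((t-a)^2/2 - (b-a)*(t-a)/4) * f' t| ≤ M * ((b-a)^3/192) := by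
    refine piece_bound a c1 (fun t => (t-a)^2/2 - (b-a)*(t-a)/4) (fun t => (b-a)*(t-a)/4 - (t-a)^2/2) f' M ((b-a)^3/192) hM0
      (by positivity) ?_ ?_ ?_ (haeM a c1 le_rfl hac1 hc1b)
    · intro t ht
      rw [uIoc_of_le hac1] at ht
      have h1 : a ≤ t := le_of_lt ht.1
      have h2 : t ≤ a + (b-a)/4 := by
        have h3 := ht.2
        rw [hc1def] at h3
        linarith
      show |(t-a)^2/2 - (b-a)*(t-a)/4| ≤ (b-a)*(t-a)/4 - (t-a)^2/2
      rw [abs_of_nonpos (sign1 a b t h1 h2)]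
      linarith
    · exact (by fun_prop : Continuous fun t : ℝ =>
        (b-a)*(t-a)/4 - (t-a)^2/2).intervalIntegrable _ _
    · have hd : ∀ x ∈ uIcc a c1, HasDerivAt
          (fun t : ℝ => (b-a)*(t-a)^2/8 - (t-a)^3/6)
          ((b-a)*(x-a)/4 - (x-a)^2/2) x := by
        intro x _
        have h := (((((hasDerivAt_id x).sub_const a).pow 2).const_mul (b-a)).div_const 8).sub
          ((((hasDerivAt_id x).sub_const a).pow 3).div_const 6)
        simp only [id_eq] at h
        refine h.congr_deriv ?_
        push_cast
        ring
      rw [intervalIntegral.integral_eq_sub_of_hasDerivAt hd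
        ((by fun_prop : Continuous fun t : ℝ =>
          (b-a)*(t-a)/4 - (t-a)^2/2).intervalIntegrable _ _)]
      rw [hc1def]
      ring
  have hb2 : |∫ t in c1..c2, ((t-(a+b)/2)^2/2) * f' t| ≤ M * ((b-a)^3/192) := by
    refine piece_bound c1 c2 (fun t => (t-(a+b)/2)^2/2) (fun t => (t-(a+b)/2)^2/2) f' M ((b-a)^3/192) hM0
      (by positivity) ?_ ?_ ?_ (haeM c1 c2 hac1 hc1c2 hc2b)
    · intro t _
      show |(t-(a+b)/2)^2/2| ≤ (t-(a+b)/2)^2/2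
      rw [abs_of_nonneg (by positivity)]
    · exact (by fun_prop : Continuous fun t : ℝ => (t-(a+b)/2)^2/2).intervalIntegrable _ _
    · have hd : ∀ x ∈ uIcc c1 c2, HasDerivAt
          (fun t : ℝ => (t-(a+b)/2)^3/6) ((x-(a+b)/2)^2/2) x := by
        intro x _
        have h := ((((hasDerivAt_id x).sub_const ((a+b)/2)).pow 3)).div_const 6
        simp only [id_eq] at h
        refine h.congr_deriv ?_
        push_cast
        ring
      rw [intervalIntegral.integral_eq_sub_of_hasDerivAt hd
        ((by fun_prop : Continuous fun t : ℝ => (t-(a+b)/2)^2/2).intervalIntegrable _ _)]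
      rw [hc1def, hc2def]
      ring
  have hb3 : |∫ t in c2..b, ((t-b)*(t-(a+b)/2)/2) * f' t| ≤ M * ((b-a)^3/192) := by
    refine piece_bound c2 b (fun t => (t-b)*(t-(a+b)/2)/2) (fun t => (b-t)*(t-(a+b)/2)/2) f' M ((b-a)^3/192) hM0
      (by positivity) ?_ ?_ ?_ (haeM c2 b hac2 hc2b le_rfl)
    · intro t ht
      rw [uIoc_of_le hc2b] at ht
      have h1 : a + 3*(b-a)/4 ≤ t := by
        have h3 := ht.1
        rw [hc2def] at h3
        linarith
      have h2 : t ≤ b := ht.2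
      show |(t-b)*(t-(a+b)/2)/2| ≤ (b-t)*(t-(a+b)/2)/2
      rw [abs_of_nonpos (sign3 a b t h1 h2)]
      linarith
    · exact (by fun_prop : Continuous fun t : ℝ =>
        (b-t)*(t-(a+b)/2)/2).intervalIntegrable _ _
    · have hd : ∀ x ∈ uIcc c2 b, HasDerivAt
          (fun t : ℝ => -(t^3)/3/2 + (b+(a+b)/2)*t^2/2/2 - b*((a+b)/2)*t/2)
          ((b-x)*(x-(a+b)/2)/2) x := by
        intro x _
        have h := ((((hasDerivAt_pow 3 x).div_const 3).neg.add
          (((hasDerivAt_pow 2 x).const_mul (b+(a+b)/2)).div_const 2)).sub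
          ((hasDerivAt_id x).const_mul (b*((a+b)/2)))).div_const 2
        simp only [id_eq] at h
        refine (h.congr_deriv ?_).congr_of_eventuallyEq (Filter.Eventually.of_forall ?_)
        · push_cast
          ring
        · intro t
          simp only [Pi.add_apply, Pi.sub_apply, Pi.neg_apply]
          ring
      rw [intervalIntegral.integral_eq_sub_of_hasDerivAt hd
        ((by fun_prop : Continuous fun t : ℝ =>
          (b-t)*(t-(a+b)/2)/2).intervalIntegrable _ _)]
      rw [hc2def]
      ring
  -- assemble
  rw [key, abs_div, abs_of_pos hL, abs_neg]
  rw [div_le_iff₀ hL]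
  calc |(∫ t in a..c1, ((t-a)^2/2 - (b-a)*(t-a)/4) * f' t)
        + (∫ t in c1..c2, ((t-(a+b)/2)^2/2) * f' t)
        + (∫ t in c2..b, ((t-b)*(t-(a+b)/2)/2) * f' t)|
      ≤ |∫ t in a..c1, ((t-a)^2/2 - (b-a)*(t-a)/4) * f' t|
        + |∫ t in c1..c2, ((t-(a+b)/2)^2/2) * f' t|
        + |∫ t in c2..b, ((t-b)*(t-(a+b)/2)/2) * f' t| := by
        exact (abs_add_le _ _).trans (add_le_add_left (abs_add_le _ _) _)
    _ ≤ M * ((b-a)^3/192) + M * ((b-a)^3/192) + M * ((b-a)^3/192) :=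
        add_le_add (add_le_add hb1 hb2) hb3
    _ ≤ 1/64 * (b - a)^2 * M * (b - a) := by
        have : (0:ℝ) ≤ (b-a)^3 := by positivity
        nlinarith
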